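/- A strategy ϑ* ∈ Θ_{t,T}(0) is optimal for the conditional mean-variance hedging problem V^H_t(x) = essinf_{ϑ∈Θ} E[(H − x − ∫_t^T ϑ_r dS_r)^2 | F_t] if and only if the process u ↦ V^H_u(x + ∫_t^u ϑ*_r dS_r), t ≤ u ≤ T, is a P-martingale; moreover, for every ϑ ∈ Θ the process u ↦ V^H_u(x + ∫_t^u ϑ_r dS_r) is a P-submartingale (martingale optimality principle). -/

import Mathlib

open MeasureTheory

open Filter Topology

set_option maxHeartbeats 2000000


private lemma intMin {Ω : Type*} {m : MeasurableSpace Ω} {μ : Measure Ω} {f g : Ω → ℝ}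
    (hf : Integrable f μ) (hg : Integrable g μ) :
    Integrable (fun ω => min (f ω) (g ω)) μ := by
  exact hf.inf hg

lemma keyA {Ω : Type*} {m : MeasurableSpace Ω} {μ : Measure Ω} [IsProbabilityMeasure μ]
    {ι : Type*} [Nonempty ι] (f : ι → Ω → ℝ) (V : Ω → ℝ)
    (hint : ∀ i, Integrable (f i) μ)
    (hnn : ∀ i, 0 ≤ᵐ[μ] f i)
    (hdir : ∀ i j, ∃ k, f k ≤ᵐ[μ] fun ω => min (f i ω) (f j ω))
    (hle : ∀ i, V ≤ᵐ[μ] f i)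
    (hglb : ∀ W : Ω → ℝ, (∀ i, W ≤ᵐ[μ] f i) → W ≤ᵐ[μ] V) :
    ∃ χ : ℕ → ι,
      (∀ᵐ ω ∂μ, (Antitone fun n => f (χ n) ω) ∧ ∀ n, 0 ≤ f (χ n) ω ∧ V ω ≤ f (χ n) ω) ∧
      (∀ᵐ ω ∂μ, Tendsto (fun n => f (χ n) ω) atTop (𝓝 (V ω))) := by
  classical
  set a : ℝ := ⨅ i, ∫ ω, f i ω ∂μ with ha
  have hbdd : BddBelow (Set.range fun i => ∫ ω, f i ω ∂μ) := by
    refine ⟨0, ?_⟩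
    rintro r ⟨i, rfl⟩
    exact integral_nonneg_of_ae (hnn i)
  have hψ : ∀ n : ℕ, ∃ i, ∫ ω, f i ω ∂μ < a + (n + 1 : ℝ)⁻¹ := by
    intro n
    refine exists_lt_of_ciInf_lt ?_
    rw [← ha]
    have : (0 : ℝ) < (n + 1 : ℝ)⁻¹ := by positivity
    linarith
  choose ψ hψlt using hψ
  let χ : ℕ → ι := fun n => Nat.rec (ψ 0) (fun n c => Classical.choose (hdir c (ψ (n + 1)))) n
  have hχ0 : χ 0 = ψ 0 := rfl
  have hχs : ∀ n, f (χ (n + 1)) ≤ᵐ[μ] fun ω => min (f (χ n) ω) (f (ψ (n + 1)) ω) := fun n =>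
    Classical.choose_spec (hdir (χ n) (ψ (n + 1)))
  have hanti : ∀ᵐ ω ∂μ, (Antitone fun n => f (χ n) ω) ∧ ∀ n, 0 ≤ f (χ n) ω ∧ V ω ≤ f (χ n) ω := by
    refine ((ae_all_iff.2 hχs).and ((ae_all_iff.2 fun n => hnn (χ n)).and
      (ae_all_iff.2 fun n => hle (χ n)))).mono ?_
    rintro ω ⟨h1, h2, h3⟩
    exact ⟨antitone_nat_of_succ_le fun n => (h1 n).trans (min_le_left _ _),
      fun n => ⟨h2 n, h3 n⟩⟩
  refine ⟨χ, hanti, ?_⟩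
  set g : Ω → ℝ := fun ω => ⨅ n, f (χ n) ω with hg
  have htendg : ∀ᵐ ω ∂μ, Tendsto (fun n => f (χ n) ω) atTop (𝓝 (g ω)) := by
    refine hanti.mono ?_
    rintro ω ⟨h1, h2⟩
    exact tendsto_atTop_ciInf h1 ⟨0, by rintro r ⟨n, rfl⟩; exact (h2 n).1⟩
  have hgmeas : AEStronglyMeasurable g μ :=
    aestronglyMeasurable_of_tendsto_ae atTop (fun n => (hint (χ n)).aestronglyMeasurable) htendg
  have hgbound : ∀ᵐ ω ∂μ, 0 ≤ g ω ∧ g ω ≤ f (χ 0) ω := by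
    refine hanti.mono ?_
    rintro ω ⟨h1, h2⟩
    exact ⟨le_ciInf fun n => (h2 n).1, ciInf_le ⟨0, by rintro r ⟨n, rfl⟩; exact (h2 n).1⟩ 0⟩
  have hgint : Integrable g μ := by
    refine Integrable.mono' (hint (χ 0)) hgmeas (hgbound.mono ?_)
    rintro ω ⟨h0, h1⟩
    rwa [Real.norm_eq_abs, abs_of_nonneg h0]
  have hIa : Tendsto (fun n => ∫ ω, f (χ n) ω ∂μ) atTop (𝓝 a) := by
    have h1 : ∀ n : ℕ, a ≤ ∫ ω, f (χ n) ω ∂μ := fun n => ciInf_le hbdd (χ n)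
    have h2 : ∀ n : ℕ, ∫ ω, f (χ n) ω ∂μ ≤ a + (n + 1 : ℝ)⁻¹ := by
      intro n
      cases n with
      | zero => exact le_of_lt (hχ0 ▸ hψlt 0)
      | succ n =>
        refine le_trans ?_ (hψlt (n + 1)).le
        refine integral_mono_ae (hint _) (hint _) ?_
        exact (hχs n).mono fun ω h => h.trans (min_le_right _ _)
    have hub : Tendsto (fun n : ℕ => a + ((n : ℝ) + 1)⁻¹) atTop (𝓝 a) := by
      have h0 : Tendsto (fun n : ℕ => ((n : ℝ) + 1)⁻¹) atTop (𝓝 0) :=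
        tendsto_one_div_add_atTop_nhds_zero_nat.congr (by intro n; rw [one_div])
      simpa using tendsto_const_nhds.add h0
    exact tendsto_of_tendsto_of_tendsto_of_le_of_le tendsto_const_nhds hub h1 h2
  have hInt_g : ∫ ω, g ω ∂μ = a := by
    have hdct : Tendsto (fun n => ∫ ω, f (χ n) ω ∂μ) atTop (𝓝 (∫ ω, g ω ∂μ)) := by
      refine tendsto_integral_of_dominated_convergence (fun ω => f (χ 0) ω)
        (fun n => (hint (χ n)).aestronglyMeasurable) (hint (χ 0)) ?_ htendg
      intro n
      refine hanti.mono ?_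
      rintro ω ⟨h1, h2⟩
      rw [Real.norm_eq_abs, abs_of_nonneg (h2 n).1]
      exact h1 (Nat.zero_le n)
    exact tendsto_nhds_unique hdct hIa
  have hglow : ∀ i, g ≤ᵐ[μ] f i := by
    intro i
    have hρs : ∀ n, f (Classical.choose (hdir (χ n) i)) ≤ᵐ[μ]
        fun ω => min (f (χ n) ω) (f i ω) := fun n => Classical.choose_spec (hdir (χ n) i)
    have hminint : ∀ n, Integrable (fun ω => min (f (χ n) ω) (f i ω)) μ :=
      fun n => intMin (hint (χ n)) (hint i)
    have hIlow : ∀ n, a ≤ ∫ ω, min (f (χ n) ω) (f i ω) ∂μ := fun n =>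
      le_trans (ciInf_le hbdd _) (integral_mono_ae (hint _) (hminint n) (hρs n))
    have htendmin : ∀ᵐ ω ∂μ, Tendsto (fun n => min (f (χ n) ω) (f i ω)) atTop
        (𝓝 (min (g ω) (f i ω))) :=
      htendg.mono fun ω h => h.min tendsto_const_nhds
    have hdct2 : Tendsto (fun n => ∫ ω, min (f (χ n) ω) (f i ω) ∂μ) atTop
        (𝓝 (∫ ω, min (g ω) (f i ω) ∂μ)) := by
      refine tendsto_integral_of_dominated_convergence (fun ω => f (χ 0) ω)
        (fun n => (hminint n).aestronglyMeasurable) (hint (χ 0)) ?_ htendmin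
      intro n
      refine (hanti.and (hnn i)).mono ?_
      rintro ω ⟨⟨h1, h2⟩, h3⟩
      rw [Real.norm_eq_abs, abs_of_nonneg (le_min (h2 n).1 h3)]
      exact (min_le_left _ _).trans (h1 (Nat.zero_le n))
    have hIminle : a ≤ ∫ ω, min (g ω) (f i ω) ∂μ :=
      le_of_tendsto_of_tendsto' tendsto_const_nhds hdct2 hIlow
    have hmint : Integrable (fun ω => min (g ω) (f i ω)) μ := intMin hgint (hint i)
    have hnonneg : 0 ≤ᵐ[μ] fun ω => g ω - min (g ω) (f i ω) :=
      Eventually.of_forall fun ω => by simp [min_le_left]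
    have hzero : ∫ ω, (g ω - min (g ω) (f i ω)) ∂μ = 0 := by
      rw [integral_sub hgint hmint, hInt_g]
      have h4 : ∫ ω, min (g ω) (f i ω) ∂μ ≤ ∫ ω, g ω ∂μ :=
        integral_mono_ae hmint hgint (Eventually.of_forall fun ω => min_le_left _ _)
      rw [hInt_g] at h4
      linarith
    have hae := (integral_eq_zero_iff_of_nonneg_ae hnonneg (hgint.sub hmint)).1 hzero
    refine hae.mono fun ω h => ?_
    have h' : g ω - min (g ω) (f i ω) = 0 := h
    have := min_le_right (g ω) (f i ω)
    linarith
  have hgV : g =ᵐ[μ] V := by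
    have h1 : g ≤ᵐ[μ] V := hglb g hglow
    have h2 : V ≤ᵐ[μ] g := by
      refine hanti.mono ?_
      rintro ω ⟨_, h2⟩
      exact le_ciInf fun n => (h2 n).2
    exact h1.antisymm h2
  refine htendg.and hgV |>.mono ?_
  rintro ω ⟨h1, h2⟩
  rwa [← h2]


lemma keyB {Ω : Type*} {m0 : MeasurableSpace Ω} {μ : Measure Ω} [IsProbabilityMeasure μ]
    {m : MeasurableSpace Ω} (hm : m ≤ m0)
    (g : ℕ → Ω → ℝ) (V W : Ω → ℝ)
    (hgint : ∀ n, Integrable (g n) μ) (hVint : Integrable V μ)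
    (hmono : ∀ᵐ ω ∂μ, (Antitone fun n => g n ω) ∧ ∀ n, V ω ≤ g n ω)
    (htend : ∀ᵐ ω ∂μ, Tendsto (fun n => g n ω) atTop (𝓝 (V ω)))
    (hW : ∀ n, W ≤ᵐ[μ] μ[g n|m]) :
    W ≤ᵐ[μ] μ[V|m] := by
  set h : ℕ → Ω → ℝ := fun n => μ[g n|m] with hh
  set L : Ω → ℝ := μ[V|m] with hL
  have hgle : ∀ n, g (n + 1) ≤ᵐ[μ] g n := fun n =>
    hmono.mono fun ω hω => hω.1 (Nat.le_succ n)
  have hVg : ∀ n, V ≤ᵐ[μ] g n := fun n => hmono.mono fun ω hω => hω.2 n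
  have hhle : ∀ n, h (n + 1) ≤ᵐ[μ] h n := fun n =>
    condExp_mono (hgint (n + 1)) (hgint n) (hgle n)
  have hLh : ∀ n, L ≤ᵐ[μ] h n := fun n => condExp_mono hVint (hgint n) (hVg n)
  have hAE : ∀ᵐ ω ∂μ, (Antitone fun n => h n ω) ∧ ∀ n, L ω ≤ h n ω := by
    refine ((ae_all_iff.2 hhle).and (ae_all_iff.2 hLh)).mono ?_
    rintro ω ⟨h1, h2⟩
    exact ⟨antitone_nat_of_succ_le h1, h2⟩
  set hinf : Ω → ℝ := fun ω => ⨅ n, h n ω with hhinf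
  have htendh : ∀ᵐ ω ∂μ, Tendsto (fun n => h n ω) atTop (𝓝 (hinf ω)) := by
    refine hAE.mono ?_
    rintro ω ⟨h1, h2⟩
    exact tendsto_atTop_ciInf h1 ⟨L ω, by rintro r ⟨n, rfl⟩; exact h2 n⟩
  have hmeasn : ∀ n, AEStronglyMeasurable[m0] (h n) μ := fun n =>
    (stronglyMeasurable_condExp.mono hm).aestronglyMeasurable
  have hinfmeas : AEStronglyMeasurable[m0] hinf μ :=
    aestronglyMeasurable_of_tendsto_ae atTop hmeasn htendh
  have hinfbd : ∀ᵐ ω ∂μ, L ω ≤ hinf ω ∧ hinf ω ≤ h 0 ω := by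
    refine hAE.mono ?_
    rintro ω ⟨h1, h2⟩
    exact ⟨le_ciInf h2, ciInf_le ⟨L ω, by rintro r ⟨n, rfl⟩; exact h2 n⟩ 0⟩
  have hinfint : Integrable hinf μ := by
    refine Integrable.mono' (integrable_condExp.abs.add integrable_condExp.abs :
      Integrable (fun ω => |h 0 ω| + |L ω|) μ) hinfmeas (hinfbd.mono ?_)
    rintro ω ⟨h1, h2⟩
    rw [Real.norm_eq_abs]
    rcases le_or_gt 0 (hinf ω) with h0 | h0
    · rw [abs_of_nonneg h0]
      exact h2.trans ((le_abs_self _).trans (le_add_of_nonneg_right (abs_nonneg _)))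
    · rw [abs_of_neg h0]
      have : -hinf ω ≤ -L ω := neg_le_neg h1
      exact this.trans ((neg_le_abs _).trans (le_add_of_nonneg_left (abs_nonneg _)))
  -- integrals
  have hIg : Tendsto (fun n => ∫ ω, g n ω ∂μ) atTop (𝓝 (∫ ω, V ω ∂μ)) := by
    refine tendsto_integral_of_dominated_convergence (fun ω => |g 0 ω| + |V ω|)
      (fun n => (hgint n).aestronglyMeasurable) ((hgint 0).abs.add hVint.abs) ?_ htend
    intro n
    refine hmono.mono ?_
    rintro ω ⟨h1, h2⟩
    rw [Real.norm_eq_abs]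
    rcases le_or_gt 0 (g n ω) with h0 | h0
    · rw [abs_of_nonneg h0]
      exact (h1 (Nat.zero_le n)).trans ((le_abs_self _).trans (le_add_of_nonneg_right (abs_nonneg _)))
    · rw [abs_of_neg h0]
      exact (neg_le_neg (h2 n)).trans ((neg_le_abs _).trans (le_add_of_nonneg_left (abs_nonneg _)))
  have hIh : Tendsto (fun n => ∫ ω, h n ω ∂μ) atTop (𝓝 (∫ ω, hinf ω ∂μ)) := by
    refine tendsto_integral_of_dominated_convergence (fun ω => |h 0 ω| + |L ω|)
      hmeasn
      (integrable_condExp.abs.add integrable_condExp.abs) ?_ htendh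
    intro n
    refine hAE.mono ?_
    rintro ω ⟨h1, h2⟩
    rw [Real.norm_eq_abs]
    rcases le_or_gt 0 (h n ω) with h0 | h0
    · rw [abs_of_nonneg h0]
      exact (h1 (Nat.zero_le n)).trans ((le_abs_self _).trans (le_add_of_nonneg_right (abs_nonneg _)))
    · rw [abs_of_neg h0]
      exact (neg_le_neg (h2 n)).trans ((neg_le_abs _).trans (le_add_of_nonneg_left (abs_nonneg _)))
  have hIeq : ∀ n, ∫ ω, h n ω ∂μ = ∫ ω, g n ω ∂μ := fun n => integral_condExp hm
  have hIinf : ∫ ω, hinf ω ∂μ = ∫ ω, V ω ∂μ := by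
    refine tendsto_nhds_unique hIh ?_
    exact hIg.congr fun n => (hIeq n).symm
  have hIL : ∫ ω, L ω ∂μ = ∫ ω, V ω ∂μ := integral_condExp hm
  -- hinf = L a.e.
  have hnneg : 0 ≤ᵐ[μ] fun ω => hinf ω - L ω := hinfbd.mono fun ω hω => by
    simp only [Pi.zero_apply]; linarith [hω.1]
  have hzero : ∫ ω, (hinf ω - L ω) ∂μ = 0 := by
    rw [integral_sub hinfint integrable_condExp, hIinf, hIL, sub_self]
  have heq := (integral_eq_zero_iff_of_nonneg_ae hnneg (hinfint.sub integrable_condExp)).1 hzero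
  have hWh : ∀ᵐ ω ∂μ, ∀ n, W ω ≤ h n ω := ae_all_iff.2 hW
  refine (hWh.and heq).mono ?_
  rintro ω ⟨h1, h2⟩
  have h2' : hinf ω - L ω = 0 := h2
  have h3 : W ω ≤ hinf ω := le_ciInf h1
  linarith


/-- Proposition 1.1, martingale optimality principle.
`Gfrom ϑ a b` represents the stochastic integral `∫_a^b ϑ_r dS_r`; `V u c` is the
conditional value process `V^H_u(c) = essinf_ϑ E[(H - c - ∫_u^T ϑ dS)² | F_u]`,
characterised as the greatest a.e. lower bound (`hVle`, `hVglb`).  `hlat` is the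
lattice (closedness under minima) property of the family `Γ`, `hpaste` the pasting
(bifurcation) property of `Θ`, `hflow` the additivity of the integral, and `hstar0`
encodes `ϑ* ∈ Θ_{t,T}(0)`.  Conclusions: (1) each `u ↦ V^H_u(x + ∫_t^u ϑ dS)` is a
`P`-submartingale on `[t,T]`; (2) `ϑ*` is optimal for `V^H_t(x)` iff
`u ↦ V^H_u(x + ∫_t^u ϑ*_r dS_r)` is a `P`-martingale on `[t,T]`. -/
theorem martingale_optimality_principle
    {Ω : Type*} {m : MeasurableSpace Ω} (μ : Measure Ω) [IsProbabilityMeasure μ]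
    (F : Filtration ℝ m) (T : ℝ) (hT : 0 ≤ T)
    (H : Ω → ℝ) (hH : MemLp H 2 μ) (x : ℝ) (t : ℝ) (ht0 : 0 ≤ t) (htT : t ≤ T)
    (Θ : Type*) (Gfrom : Θ → ℝ → ℝ → Ω → ℝ)
    (hG2 : ∀ ϑ a b, MemLp (Gfrom ϑ a b) 2 μ)
    (hGadapt : ∀ ϑ a b, StronglyMeasurable[F b] (Gfrom ϑ a b))
    (hflow : ∀ ϑ a b c, a ≤ b → b ≤ c → ∀ ω,
      Gfrom ϑ a c ω = Gfrom ϑ a b ω + Gfrom ϑ b c ω)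
    (hpaste : ∀ (u : ℝ) (ϑ ψ : Θ), ∃ χ : Θ,
      (∀ a b, b ≤ u → Gfrom χ a b = Gfrom ϑ a b) ∧
      (∀ b, u ≤ b → Gfrom χ u b = Gfrom ψ u b))
    (V : ℝ → (Ω → ℝ) → Ω → ℝ)
    (hVle : ∀ u, u ≤ T → ∀ c : Ω → ℝ, ∀ ϑ : Θ,
      V u c ≤ᵐ[μ] μ[fun ω => (H ω - c ω - Gfrom ϑ u T ω) ^ 2 | F u])
    (hVglb : ∀ u, u ≤ T → ∀ c : Ω → ℝ, ∀ W : Ω → ℝ,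
      (∀ ϑ : Θ, W ≤ᵐ[μ] μ[fun ω => (H ω - c ω - Gfrom ϑ u T ω) ^ 2 | F u]) →
      W ≤ᵐ[μ] V u c)
    (hlat : ∀ u, u ≤ T → ∀ (c : Ω → ℝ) (ϑ₁ ϑ₂ : Θ), ∃ ϑ₃ : Θ,
      μ[fun ω => (H ω - c ω - Gfrom ϑ₃ u T ω) ^ 2 | F u] ≤ᵐ[μ]
        fun ω => min ((μ[fun ω' => (H ω' - c ω' - Gfrom ϑ₁ u T ω') ^ 2 | F u]) ω)
                     ((μ[fun ω' => (H ω' - c ω' - Gfrom ϑ₂ u T ω') ^ 2 | F u]) ω))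
    (ϑstar : Θ) (hstar0 : ∀ a b, b ≤ t → Gfrom ϑstar a b = 0) :
    -- (1) submartingale property of the value along any strategy
    (∀ ϑ : Θ, ∀ u v, t ≤ u → u ≤ v → v ≤ T →
      V u (fun ω => x + Gfrom ϑ t u ω) ≤ᵐ[μ]
        μ[V v (fun ω => x + Gfrom ϑ t v ω) | F u]) ∧
    -- (2) ϑ* is optimal for V^H_t(x) iff the value along ϑ* is a martingale on [t,T]
    ((V t (fun _ => x) =ᵐ[μ]
        μ[fun ω => (H ω - x - Gfrom ϑstar t T ω) ^ 2 | F t]) ↔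
      (∀ u v, t ≤ u → u ≤ v → v ≤ T →
        V u (fun ω => x + Gfrom ϑstar t u ω) =ᵐ[μ]
          μ[V v (fun ω => x + Gfrom ϑstar t v ω) | F u])) := by
  classical
  haveI : Nonempty Θ := ⟨ϑstar⟩
  -- integrability of the squared costs
  have hsq : ∀ (ψ : Θ) (v : ℝ) (c : Ω → ℝ), MemLp c 2 μ →
      Integrable (fun ω => (H ω - c ω - Gfrom ψ v T ω) ^ 2) μ := by
    intro ψ v c hc
    have := ((hH.sub hc).sub (hG2 ψ v T)).integrable_sq
    simpa [Pi.sub_apply] using this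
  have hnn : ∀ (v : ℝ) (c : Ω → ℝ) (ψ : Θ),
      (0 : Ω → ℝ) ≤ᵐ[μ] μ[fun ω => (H ω - c ω - Gfrom ψ v T ω) ^ 2 | F v] :=
    fun v c ψ => condExp_nonneg (Eventually.of_forall fun ω => sq_nonneg _)
  -- nonnegativity of V
  have hVnn : ∀ v, v ≤ T → ∀ c : Ω → ℝ, (0 : Ω → ℝ) ≤ᵐ[μ] V v c :=
    fun v hv c => hVglb v hv c 0 (fun ψ => hnn v c ψ)
  -- minimizing antitone sequences
  have hseq : ∀ v, v ≤ T → ∀ c : Ω → ℝ, MemLp c 2 μ → ∃ χ : ℕ → Θ,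
      (∀ᵐ ω ∂μ, (Antitone fun n =>
          (μ[fun ω' => (H ω' - c ω' - Gfrom (χ n) v T ω') ^ 2 | F v]) ω) ∧
        ∀ n, 0 ≤ (μ[fun ω' => (H ω' - c ω' - Gfrom (χ n) v T ω') ^ 2 | F v]) ω ∧
          V v c ω ≤ (μ[fun ω' => (H ω' - c ω' - Gfrom (χ n) v T ω') ^ 2 | F v]) ω) ∧
      (∀ᵐ ω ∂μ, Tendsto
        (fun n => (μ[fun ω' => (H ω' - c ω' - Gfrom (χ n) v T ω') ^ 2 | F v]) ω)
        atTop (𝓝 (V v c ω))) := by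
    intro v hv c hc
    exact keyA (fun ψ => μ[fun ω' => (H ω' - c ω' - Gfrom ψ v T ω') ^ 2 | F v]) (V v c)
      (fun ψ => integrable_condExp) (fun ψ => hnn v c ψ) (hlat v hv c) (hVle v hv c)
      (fun W hW => hVglb v hv c W hW)
  -- integrability of the value process
  have hVint : ∀ v, v ≤ T → ∀ c : Ω → ℝ, MemLp c 2 μ → Integrable (V v c) μ := by
    intro v hv c hc
    obtain ⟨χ, h1, h2⟩ := hseq v hv c hc
    have hmeas : AEStronglyMeasurable (V v c) μ :=
      aestronglyMeasurable_of_tendsto_ae atTop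
        (fun n => (stronglyMeasurable_condExp.mono (F.le v)).aestronglyMeasurable) h2
    refine Integrable.mono' (integrable_condExp :
      Integrable (μ[fun ω' => (H ω' - c ω' - Gfrom (χ 0) v T ω') ^ 2 | F v]) μ)
      hmeas ?_
    refine (h1.and (hVnn v hv c)).mono ?_
    rintro ω ⟨⟨_, h3⟩, h4⟩
    rw [Real.norm_eq_abs, abs_of_nonneg h4]
    exact (h3 0).2
  have hc2 : ∀ (ϑ : Θ) (a b : ℝ), MemLp (fun ω => x + Gfrom ϑ a b ω) 2 μ := by
    intro ϑ a b
    have := (memLp_const (μ := μ) x).add (hG2 ϑ a b)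
    exact this
  -- Part 1
  have part1 : ∀ ϑ : Θ, ∀ u v, t ≤ u → u ≤ v → v ≤ T →
      V u (fun ω => x + Gfrom ϑ t u ω) ≤ᵐ[μ]
        μ[V v (fun ω => x + Gfrom ϑ t v ω) | F u] := by
    intro ϑ u v htu huv hvT
    have huT : u ≤ T := huv.trans hvT
    obtain ⟨χ, h1, h2⟩ := hseq v hvT (fun ω => x + Gfrom ϑ t v ω) (hc2 ϑ t v)
    refine keyB (F.le u)
      (fun n => μ[fun ω' => (H ω' - (x + Gfrom ϑ t v ω') - Gfrom (χ n) v T ω') ^ 2 | F v])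
      (V v (fun ω => x + Gfrom ϑ t v ω)) (V u (fun ω => x + Gfrom ϑ t u ω))
      (fun n => integrable_condExp) (hVint v hvT _ (hc2 ϑ t v))
      (h1.mono ?_) h2 ?_
    · rintro ω ⟨ha, hb⟩
      exact ⟨ha, fun n => (hb n).2⟩
    · intro n
      obtain ⟨χ', hA, hB⟩ := hpaste v ϑ (χ n)
      have hpt : (fun ω => (H ω - (x + Gfrom ϑ t u ω) - Gfrom χ' u T ω) ^ 2) =
          fun ω => (H ω - (x + Gfrom ϑ t v ω) - Gfrom (χ n) v T ω) ^ 2 := by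
        funext ω
        have h3 := hflow χ' u v T huv hvT ω
        have h4 : Gfrom χ' u v ω = Gfrom ϑ u v ω := by rw [hA u v le_rfl]
        have h5 : Gfrom χ' v T ω = Gfrom (χ n) v T ω := by rw [hB T hvT]
        have h6 := hflow ϑ t u v htu huv ω
        have hbase : H ω - (x + Gfrom ϑ t u ω) - Gfrom χ' u T ω =
            H ω - (x + Gfrom ϑ t v ω) - Gfrom (χ n) v T ω := by
          rw [h3, h4, h5, h6]; ring
        rw [hbase]
      have h7 := hVle u huT (fun ω => x + Gfrom ϑ t u ω) χ'
      rw [hpt] at h7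
      exact h7.trans (condExp_condExp_of_le (F.mono huv) (F.le v)).symm.le
  refine ⟨part1, ?_, ?_⟩
  -- helper: initial value
  · -- optimal ⇒ martingale
    intro hopt u v htu huv hvT
    have huT : u ≤ T := huv.trans hvT
    have htv : t ≤ v := htu.trans huv
    have hstart : (fun ω => x + Gfrom ϑstar t t ω) = fun _ : Ω => x := by
      funext ω
      rw [hstar0 t t le_rfl]
      simp
    -- submartingale inequality at (u,v)
    have hsub := part1 ϑstar u v htu huv hvT
    -- Y_v ≤ Z_v
    have hZfun : (fun ω => (H ω - (x + Gfrom ϑstar t v ω) - Gfrom ϑstar v T ω) ^ 2) =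
        fun ω => (H ω - x - Gfrom ϑstar t T ω) ^ 2 := by
      funext ω
      have h3 := hflow ϑstar t v T htv hvT ω
      have hbase : H ω - (x + Gfrom ϑstar t v ω) - Gfrom ϑstar v T ω =
          H ω - x - Gfrom ϑstar t T ω := by rw [h3]; ring
      rw [hbase]
    have hs2 : V v (fun ω => x + Gfrom ϑstar t v ω) ≤ᵐ[μ]
        μ[fun ω => (H ω - x - Gfrom ϑstar t T ω) ^ 2 | F v] := by
      have := hVle v hvT (fun ω => x + Gfrom ϑstar t v ω) ϑstar
      rwa [hZfun] at this
    have hs3 : μ[V v (fun ω => x + Gfrom ϑstar t v ω) | F t] ≤ᵐ[μ]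
        μ[fun ω => (H ω - x - Gfrom ϑstar t T ω) ^ 2 | F t] := by
      have hmono := condExp_mono (m := F t) (hVint v hvT _ (hc2 ϑstar t v))
        (integrable_condExp) hs2
      exact hmono.trans (condExp_condExp_of_le (F.mono htv) (F.le v)).le
    have hs1 : V t (fun _ : Ω => x) ≤ᵐ[μ]
        μ[V u (fun ω => x + Gfrom ϑstar t u ω) | F t] := by
      have := part1 ϑstar t u le_rfl htu huT
      rwa [hstart] at this
    -- chain
    have hchain : μ[V v (fun ω => x + Gfrom ϑstar t v ω) | F t] ≤ᵐ[μ]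
        μ[V u (fun ω => x + Gfrom ϑstar t u ω) | F t] :=
      hs3.trans (hopt.symm.le.trans hs1)
    -- the defect D
    set Yu := V u (fun ω => x + Gfrom ϑstar t u ω) with hYu
    set Yv := V v (fun ω => x + Gfrom ϑstar t v ω) with hYv
    have hYuint : Integrable Yu μ := hVint u huT _ (hc2 ϑstar t u)
    have hYvint : Integrable Yv μ := hVint v hvT _ (hc2 ϑstar t v)
    have hDint : Integrable (μ[Yv | F u] - Yu) μ := integrable_condExp.sub hYuint
    have hDnn : (0 : Ω → ℝ) ≤ᵐ[μ] μ[Yv | F u] - Yu := by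
      refine hsub.mono fun ω h => ?_
      simp only [Pi.sub_apply, Pi.zero_apply]
      linarith
    have hcondD : μ[μ[Yv | F u] - Yu | F t] ≤ᵐ[μ] 0 := by
      have h8 := condExp_sub (m := F t) (integrable_condExp (f := Yv) (m := F u)) hYuint
      have h9 : μ[μ[Yv | F u] | F t] =ᵐ[μ] μ[Yv | F t] :=
        condExp_condExp_of_le (F.mono htu) (F.le u)
      refine h8.le.trans ?_
      refine ((h9.sub (EventuallyEq.refl _ (μ[Yu | F t]))).le).trans ?_
      refine hchain.mono fun ω h => ?_
      simp only [Pi.sub_apply, Pi.zero_apply]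
      linarith
    have hInt0 : ∫ ω, (μ[Yv | F u] - Yu) ω ∂μ = 0 := by
      have h10 : ∫ ω, (μ[Yv | F u] - Yu) ω ∂μ = ∫ ω, (μ[μ[Yv | F u] - Yu | F t]) ω ∂μ :=
        (integral_condExp (F.le t)).symm
      have h11 : ∫ ω, (μ[μ[Yv | F u] - Yu | F t]) ω ∂μ ≤ 0 :=
        integral_nonpos_of_ae hcondD
      have h12 : 0 ≤ ∫ ω, (μ[Yv | F u] - Yu) ω ∂μ := integral_nonneg_of_ae hDnn
      linarith [h10 ▸ h11]
    have hD0 := (integral_eq_zero_iff_of_nonneg_ae hDnn hDint).1 hInt0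
    refine hD0.mono fun ω h => ?_
    have h' : (μ[Yv | F u]) ω - Yu ω = 0 := h
    linarith
  · -- martingale ⇒ optimal
    intro hmart
    have hstart : (fun ω => x + Gfrom ϑstar t t ω) = fun _ : Ω => x := by
      funext ω
      rw [hstar0 t t le_rfl]
      simp
    have h := hmart t T le_rfl htT le_rfl
    rw [hstart] at h
    refine h.trans ?_
    -- terminal value
    have hG0 : ∀ (ψ : Θ) (ω : Ω), Gfrom ψ T T ω = 0 := by
      intro ψ ω
      have := hflow ψ T T T le_rfl le_rfl ω
      linarith
    have hVT : V T (fun ω => x + Gfrom ϑstar t T ω) =ᵐ[μ]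
        μ[fun ω => (H ω - (x + Gfrom ϑstar t T ω)) ^ 2 | F T] := by
      have hfun : ∀ ψ : Θ,
          (fun ω => (H ω - (x + Gfrom ϑstar t T ω) - Gfrom ψ T T ω) ^ 2) =
          fun ω => (H ω - (x + Gfrom ϑstar t T ω)) ^ 2 := by
        intro ψ; funext ω; rw [hG0 ψ ω]; ring
      have hle' : V T (fun ω => x + Gfrom ϑstar t T ω) ≤ᵐ[μ]
          μ[fun ω => (H ω - (x + Gfrom ϑstar t T ω)) ^ 2 | F T] := by
        have := hVle T le_rfl (fun ω => x + Gfrom ϑstar t T ω) ϑstar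
        rwa [hfun ϑstar] at this
      have hge' : μ[fun ω => (H ω - (x + Gfrom ϑstar t T ω)) ^ 2 | F T] ≤ᵐ[μ]
          V T (fun ω => x + Gfrom ϑstar t T ω) := by
        refine hVglb T le_rfl _ _ fun ψ => ?_
        rw [hfun ψ]
      exact hle'.antisymm hge'
    calc μ[V T (fun ω => x + Gfrom ϑstar t T ω) | F t]
        =ᵐ[μ] μ[μ[fun ω => (H ω - (x + Gfrom ϑstar t T ω)) ^ 2 | F T] | F t] :=
          condExp_congr_ae hVT
      _ =ᵐ[μ] μ[fun ω => (H ω - (x + Gfrom ϑstar t T ω)) ^ 2 | F t] :=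
          condExp_condExp_of_le (F.mono htT) (F.le T)
      _ = μ[fun ω => (H ω - x - Gfrom ϑstar t T ω) ^ 2 | F t] := by
          rw [show (fun ω => (H ω - (x + Gfrom ϑstar t T ω)) ^ 2) =
            (fun ω => (H ω - x - Gfrom ϑstar t T ω) ^ 2) from funext fun ω => by ring]
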